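/- For any proper closed convex function f on a finite-dimensional real inner product space X and any τ > 0, every x ∈ X satisfies the Moreau decomposition x = Prox_{τ f*}(x) + τ · Prox_{f/τ}(x/τ), where f* is the Fenchel conjugate of f and Prox_g(w) = argmin_u { g(u) + (1/2)‖u − w‖² }. -/

import Mathlib

open RealInnerProductSpace

noncomputable section

/-- The Fenchel conjugate of an extended-real-valued function. -/
def conjFn {X : Type*} [NormedAddCommGroup X] [InnerProductSpace ℝ X]
    (f : X → EReal) (y : X) : EReal :=
  ⨆ x : X, ((⟪x, y⟫ : ℝ) : EReal) - f x

/-- `p` is the proximal point of `g` at `w`: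
`p` minimizes `u ↦ g(u) + (1/2)‖u − w‖²`. -/
def IsProxOf {X : Type*} [NormedAddCommGroup X] [InnerProductSpace ℝ X]
    (g : X → EReal) (w p : X) : Prop :=
  ∀ u : X, g p + ((((1:ℝ)/2) * ‖p - w‖ ^ 2 : ℝ) : EReal)
    ≤ g u + ((((1:ℝ)/2) * ‖u - w‖ ^ 2 : ℝ) : EReal)

/-- If `a ≤ b + t * c` for all small positive `t`, then `a ≤ b`. -/
lemma moreau_aux_limit (a b c : ℝ) (hc : 0 ≤ c)
    (h : ∀ t : ℝ, 0 < t → t ≤ 1 → a ≤ b + t * c) : a ≤ b := by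
  by_contra h'
  push_neg at h'
  set t : ℝ := min 1 ((a - b) / (2 * (c + 1))) with ht
  have hab : 0 < a - b := by linarith
  have hc1 : 0 < c + 1 := by linarith
  have ht0 : 0 < t := lt_min one_pos (by positivity)
  have ht1 : t ≤ 1 := min_le_left _ _
  have h2 : t ≤ (a - b) / (2 * (c + 1)) := min_le_right _ _
  have h3 : t * (2 * (c + 1)) ≤ a - b := by
    rw [div_eq_mul_inv] at h2
    calc t * (2 * (c + 1)) ≤ ((a - b) * (2 * (c + 1))⁻¹) * (2 * (c + 1)) := by
          apply mul_le_mul_of_nonneg_right h2; positivity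
      _ = a - b := by field_simp
  have h4 := h t ht0 ht1
  nlinarith [mul_le_mul_of_nonneg_left hc ht0.le]

/-- Moreau decomposition: for a proper closed convex `f` and `τ > 0`,
every `x` satisfies `x = Prox_{τ f*}(x) + τ · Prox_{f/τ}(x/τ)`. -/
theorem moreau_decomposition
    {X : Type*} [NormedAddCommGroup X] [InnerProductSpace ℝ X] [FiniteDimensional ℝ X]
    (f : X → EReal)
    (hproper : (∃ x, f x ≠ ⊤) ∧ ∀ x, f x ≠ ⊥)
    (hclosed : LowerSemicontinuous f)
    (hconvex : ∀ (x y : X) (t : ℝ), 0 ≤ t → t ≤ 1 →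
      f (t • x + (1 - t) • y) ≤ ((t : ℝ) : EReal) * f x + (((1 - t : ℝ)) : EReal) * f y)
    (τ : ℝ) (hτ : 0 < τ) (x p q : X)
    (hp : IsProxOf (fun u => ((τ : ℝ) : EReal) * conjFn f u) x p)
    (hq : IsProxOf (fun u => ((τ⁻¹ : ℝ) : EReal) * f u) (τ⁻¹ • x) q) :
    x = p + τ • q := by
  obtain ⟨⟨x₀, hx₀⟩, hbot⟩ := hproper
  have hτ' : (0:ℝ) < τ⁻¹ := inv_pos.mpr hτ
  have hττ : τ * τ⁻¹ = 1 := mul_inv_cancel₀ hτ.ne'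
  set w : X := τ⁻¹ • x with hw
  set r₀ : ℝ := (f x₀).toReal with hr₀
  have hfx₀ : f x₀ = (r₀ : EReal) := (EReal.coe_toReal hx₀ (hbot x₀)).symm
  -- Step 1 : f q is real
  have hfqt : f q ≠ ⊤ := by
    intro hT
    have h1 := hq x₀
    simp only [hT, hfx₀] at h1
    rw [EReal.coe_mul_top_of_pos hτ', EReal.top_add_coe, ← EReal.coe_mul, ← EReal.coe_add,
      top_le_iff] at h1
    exact EReal.coe_ne_top _ h1
  set rq : ℝ := (f q).toReal with hrq
  have hfq : f q = (rq : EReal) := (EReal.coe_toReal hfqt (hbot q)).symm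
  -- Step 2 : variational inequality for f at q
  have hVI : ∀ (v : X) (rv : ℝ), f v = (rv : EReal) →
      rq + ⟪x - τ • q, v - q⟫ ≤ rv := by
    intro v rv hfv
    have key : ∀ t : ℝ, 0 < t → t ≤ 1 →
        rq + ⟪x - τ • q, v - q⟫ ≤ rv + t * (τ / 2 * ‖v - q‖ ^ 2) := by
      intro t ht0 ht1
      have hu : q + t • (v - q) = t • v + (1 - t) • q := by module
      have hcv := hconvex v q t ht0.le ht1
      rw [hfv, hfq, ← EReal.coe_mul, ← EReal.coe_mul, ← EReal.coe_add] at hcv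
      set u : X := t • v + (1 - t) • q with hudef
      have hut : f u ≠ ⊤ := ne_top_of_le_ne_top (EReal.coe_ne_top _) hcv
      set ru : ℝ := (f u).toReal with hru
      have hfu : f u = (ru : EReal) := (EReal.coe_toReal hut (hbot u)).symm
      have hru_le : ru ≤ t * rv + (1 - t) * rq := by
        rw [hfu] at hcv; exact EReal.coe_le_coe_iff.mp hcv
      have h2 := hq u
      simp only [hfq, hfu] at h2
      rw [← EReal.coe_mul, ← EReal.coe_mul, ← EReal.coe_add, ← EReal.coe_add,
        EReal.coe_le_coe_iff] at h2
      -- norm expansion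
      have hexp : ‖u - w‖ ^ 2
          = ‖q - w‖ ^ 2 + 2 * (t * ⟪q - w, v - q⟫) + t ^ 2 * ‖v - q‖ ^ 2 := by
        have h5 : u - w = (q - w) + t • (v - q) := by
          rw [hudef]; module
        rw [h5, norm_add_sq_real, real_inner_smul_right, norm_smul]
        rw [Real.norm_eq_abs, abs_of_pos ht0]
        ring
      have hinner : τ * ⟪w - q, v - q⟫ = ⟪x - τ • q, v - q⟫ := by
        have hx : (τ : ℝ) • w = x := by rw [hw, smul_smul, hττ, one_smul]
        rw [← hx, show (τ:ℝ) • w - τ • q = τ • (w - q) from (smul_sub τ w q).symm,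
          real_inner_smul_left]
      have hinn2 : ⟪w - q, v - q⟫ = -⟪q - w, v - q⟫ := by
        rw [← neg_sub q w, inner_neg_left]
      -- combine
      have h2R : rq + τ * ((1:ℝ)/2 * ‖q - w‖ ^ 2) ≤ ru + τ * ((1:ℝ)/2 * ‖u - w‖ ^ 2) := by
        calc rq + τ * ((1:ℝ)/2 * ‖q - w‖ ^ 2)
            = τ * (τ⁻¹ * rq + (1:ℝ)/2 * ‖q - w‖ ^ 2) := by
              rw [mul_add, ← mul_assoc τ τ⁻¹, hττ, one_mul]
          _ ≤ τ * (τ⁻¹ * ru + (1:ℝ)/2 * ‖u - w‖ ^ 2) :=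
              mul_le_mul_of_nonneg_left h2 hτ.le
          _ = ru + τ * ((1:ℝ)/2 * ‖u - w‖ ^ 2) := by
              rw [mul_add, ← mul_assoc τ τ⁻¹, hττ, one_mul]
      rw [← hinner, hinn2, hexp] at *
      refine (mul_le_mul_iff_right₀ ht0).mp ?_
      nlinarith [h2R, hru_le]
    exact moreau_aux_limit _ _ _ (by positivity) key
  -- Step 3 : conjFn f s is real, where s = x - τ • q
  set s : X := x - τ • q with hs
  have hconj_ge : ((⟪q, s⟫ - rq : ℝ) : EReal) ≤ conjFn f s := by
    have := le_iSup (fun v : X => ((⟪v, s⟫ : ℝ) : EReal) - f v) q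
    rwa [hfq, ← EReal.coe_sub] at this
  have hconj_le : conjFn f s ≤ ((⟪q, s⟫ - rq : ℝ) : EReal) := by
    apply iSup_le
    intro v
    rcases eq_or_ne (f v) ⊤ with hv | hv
    · rw [hv]
      simp
    · have hfv : f v = ((f v).toReal : EReal) := (EReal.coe_toReal hv (hbot v)).symm
      rw [hfv, ← EReal.coe_sub, EReal.coe_le_coe_iff]
      have h7 : ⟪s, v - q⟫ = ⟪v, s⟫ - ⟪q, s⟫ := by
        rw [inner_sub_right, real_inner_comm s v, real_inner_comm s q]
      linarith [hVI v ((f v).toReal) hfv, h7]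
  have hconjs : conjFn f s = ((⟪q, s⟫ - rq : ℝ) : EReal) :=
    le_antisymm hconj_le hconj_ge
  -- Step 4 : conjFn f p is real
  have hcp_bot : conjFn f p ≠ ⊥ := by
    intro hB
    have h11 : ((⟪x₀, p⟫ : ℝ) : EReal) - f x₀ ≤ conjFn f p :=
      le_iSup (fun v : X => ((⟪v, p⟫ : ℝ) : EReal) - f v) x₀
    rw [hfx₀, ← EReal.coe_sub, hB, le_bot_iff] at h11
    exact EReal.coe_ne_bot _ h11
  have hcp_top : conjFn f p ≠ ⊤ := by
    intro hT
    have h8 := hp s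
    simp only [hT, hconjs] at h8
    rw [EReal.coe_mul_top_of_pos hτ, EReal.top_add_coe, ← EReal.coe_mul, ← EReal.coe_add,
      top_le_iff] at h8
    exact EReal.coe_ne_top _ h8
  set rp : ℝ := (conjFn f p).toReal with hrp
  have hcp : conjFn f p = (rp : EReal) := (EReal.coe_toReal hcp_top hcp_bot).symm
  have hrp_ge : ⟪q, p⟫ - rq ≤ rp := by
    have h12 : ((⟪q, p⟫ : ℝ) : EReal) - f q ≤ conjFn f p :=
      le_iSup (fun v : X => ((⟪v, p⟫ : ℝ) : EReal) - f v) q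
    rw [hfq, ← EReal.coe_sub, hcp, EReal.coe_le_coe_iff] at h12
    exact h12
  -- Step 5 : conclude
  have h9 := hp s
  simp only [hcp, hconjs] at h9
  rw [← EReal.coe_mul, ← EReal.coe_mul, ← EReal.coe_add, ← EReal.coe_add,
    EReal.coe_le_coe_iff] at h9
  have hqs : ⟪q, s⟫ = ⟪q, x⟫ - τ * ‖q‖ ^ 2 := by
    rw [hs, inner_sub_right, real_inner_smul_right, real_inner_self_eq_norm_sq]
  have hsx : ‖s - x‖ ^ 2 = τ ^ 2 * ‖q‖ ^ 2 := by
    have : s - x = -(τ • q) := by rw [hs]; abel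
    rw [this, norm_neg, norm_smul, Real.norm_eq_abs, abs_of_pos hτ]
    ring
  have hfin : ‖p + τ • q - x‖ ^ 2
      = ‖p - x‖ ^ 2 + 2 * (τ * (⟪q, p⟫ - ⟪q, x⟫)) + τ ^ 2 * ‖q‖ ^ 2 := by
    have h10 : p + τ • q - x = (p - x) + τ • q := by abel
    rw [h10, norm_add_sq_real, real_inner_smul_right, norm_smul, Real.norm_eq_abs,
      abs_of_pos hτ, real_inner_comm, inner_sub_right]
    ring
  have hzero : ‖p + τ • q - x‖ ^ 2 ≤ 0 := by
    nlinarith [mul_le_mul_of_nonneg_left hrp_ge hτ.le]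
  have : p + τ • q - x = 0 := by
    have := le_antisymm hzero (sq_nonneg _)
    have hn : ‖p + τ • q - x‖ = 0 := by
      nlinarith [norm_nonneg (p + τ • q - x)]
    exact norm_eq_zero.mp hn
  have := sub_eq_zero.mp this
  exact this.symm

end
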